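/- Let q = p^k with p prime and k ≥ 1. Any two maps F_q → F_q of the form x ↦ a x^p + b (with a ∈ F_q^*, b ∈ F_q) that have no fixed point in F_q are dynamically equivalent; i.e., among such maps there is exactly one dynamical-equivalence class consisting of maps without fixed points (when such maps exist). -/

import Mathlib

/-- Two self-maps `f g : α → α` are dynamically equivalent if there is a bijection
`σ : α → α` with `σ⁻¹ ∘ g ∘ σ = f`. -/
def DynEquiv {α : Type*} (f g : α → α) : Prop :=
  ∃ σ : Equiv.Perm α, ∀ x, σ.symm (g (σ x)) = f x

lemma DynEquiv.symm' {α : Type*} {f g : α → α} (h : DynEquiv f g) : DynEquiv g f := by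
  obtain ⟨σ, hσ⟩ := h
  refine ⟨σ.symm, fun x => ?_⟩
  have := hσ (σ.symm x)
  simp only [Equiv.apply_symm_apply] at this
  simp [← this]

lemma DynEquiv.trans' {α : Type*} {f g h : α → α} (h1 : DynEquiv f g) (h2 : DynEquiv g h) :
    DynEquiv f h := by
  obtain ⟨σ, hσ⟩ := h1
  obtain ⟨τ, hτ⟩ := h2
  refine ⟨σ.trans τ, fun x => ?_⟩
  simp only [Equiv.trans_apply, Equiv.symm_trans_apply]
  rw [hτ (σ x), hσ x]

/-- an affine permutation -/
def affPerm {F : Type*} [Field F] (u v : F) (hu : u ≠ 0) : Equiv.Perm F where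
  toFun x := u * x + v
  invFun y := u⁻¹ * (y - v)
  left_inv x := by field_simp; ring
  right_inv y := by field_simp; ring

@[simp] lemma affPerm_apply {F : Type*} [Field F] (u v : F) (hu : u ≠ 0) (x : F) :
    affPerm u v hu x = u * x + v := rfl

@[simp] lemma affPerm_symm_apply {F : Type*} [Field F] (u v : F) (hu : u ≠ 0) (y : F) :
    (affPerm u v hu).symm y = u⁻¹ * (y - v) := rfl

section aux
open Polynomial

variable {F : Type*} [Field F] {p : ℕ} [hp : Fact p.Prime] [CharP F p]

lemma affine_conj (u v : F) (hu : u ≠ 0) (hup : u ^ p = u) (β β' : F)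
    (hv : v ^ p + β' - v = u * β) :
    DynEquiv (fun x : F => x ^ p + β) (fun x : F => x ^ p + β') := by
  refine ⟨affPerm u v hu, fun x => ?_⟩
  simp only [affPerm_apply, affPerm_symm_apply]
  have h1 : (u * x + v) ^ p = u ^ p * x ^ p + v ^ p := by rw [add_pow_char, mul_pow]
  rw [h1]
  field_simp
  linear_combination x ^ p * hup + hv

lemma scale_conj (a c b : F) (hc : c ≠ 0) (hac : a * c ^ p = c) :
    DynEquiv (fun x : F => x ^ p + b * c⁻¹) (fun x : F => a * x ^ p + b) := by
  refine ⟨affPerm c 0 hc, fun x => ?_⟩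
  simp only [affPerm_apply, affPerm_symm_apply, add_zero, sub_zero]
  rw [mul_pow]
  field_simp
  linear_combination x ^ p * hac

lemma exists_scale [Fintype F] (β β' : F) (hβ : ∀ x : F, x - x ^ p ≠ β)
    (hβ' : ∀ x : F, x - x ^ p ≠ β') :
    ∃ u v : F, u ≠ 0 ∧ u ^ p = u ∧ v ^ p + β' - v = u * β := by
  classical
  have hpp : p.Prime := hp.out
  set χ : ZMod p →+* F := ZMod.castHom dvd_rfl F with hχ
  have hχp : ∀ n : ZMod p, (χ n) ^ p = χ n := by
    intro n; rw [← map_pow, ZMod.pow_card]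
  have hχinj : Function.Injective χ := χ.injective
  set T : F → F := fun x => x - x ^ p with hT
  -- scaling property
  have hscale : ∀ (n : ZMod p) (x : F), χ n * T x = T (χ n * x) := by
    intro n x
    simp only [hT, mul_pow, hχp n]
    ring
  set S : Finset F := Finset.image T Finset.univ with hS
  -- fibers of T have size ≤ p
  have hroots : (Finset.univ.filter fun z : F => z ^ p = z).card ≤ p := by
    have hdeg : ((X : F[X]) ^ p - X).degree = (p : WithBot ℕ) := by
      rw [Polynomial.degree_sub_eq_left_of_degree_lt]
      · exact Polynomial.degree_X_pow p
      · rw [Polynomial.degree_X_pow, Polynomial.degree_X]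
        exact_mod_cast hpp.one_lt
    have hP0 : ((X : F[X]) ^ p - X) ≠ 0 := by
      intro h
      rw [h, Polynomial.degree_zero] at hdeg
      exact absurd hdeg.symm (by simp)
    have hsub : (Finset.univ.filter fun z : F => z ^ p = z) ⊆
        ((X : F[X]) ^ p - X).roots.toFinset := by
      intro z hz
      simp only [Finset.mem_filter, Finset.mem_univ, true_and] at hz
      rw [Multiset.mem_toFinset, Polynomial.mem_roots hP0]
      simp [Polynomial.IsRoot, hz]
    calc (Finset.univ.filter fun z : F => z ^ p = z).card
        ≤ ((X : F[X]) ^ p - X).roots.toFinset.card := Finset.card_le_card hsub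
      _ ≤ ((X : F[X]) ^ p - X).roots.card := Multiset.toFinset_card_le _
      _ ≤ ((X : F[X]) ^ p - X).natDegree := Polynomial.card_roots' _
      _ = p := Polynomial.natDegree_eq_of_degree_eq_some hdeg
  have hfib : ∀ a ∈ Finset.univ.image T,
      (Finset.univ.filter fun x : F => T x = a).card ≤ p := by
    intro a ha
    rcases (Finset.univ.filter fun x : F => T x = a).eq_empty_or_nonempty with he | ⟨x₀, hx₀⟩
    · simp [he]
    · simp only [Finset.mem_filter, Finset.mem_univ, true_and] at hx₀
      have : (Finset.univ.filter fun x : F => T x = a).card ≤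
          (Finset.univ.filter fun z : F => z ^ p = z).card := by
        apply Finset.card_le_card_of_injOn (fun x => x - x₀)
        · intro x hx
          simp only [Finset.mem_coe, Finset.mem_filter, Finset.mem_univ, true_and] at hx ⊢
          have : (x - x₀) ^ p = x ^ p - x₀ ^ p := sub_pow_char x x₀
          rw [this]
          have h1 : x - x ^ p = a := hx
          have h2 : x₀ - x₀ ^ p = a := hx₀
          linear_combination h2 - h1
        · intro x _ y _ hxy
          simpa using sub_left_injective (by exact hxy)
      exact this.trans hroots
  have hcardup : Fintype.card F ≤ p * S.card := by
    have := Finset.card_le_mul_card_image (f := T) Finset.univ p hfib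
    simpa [hS, Finset.card_univ] using this
  -- the injection
  set φ : ZMod p × {s // s ∈ S} → F := fun ns => χ ns.1 * β + (ns.2 : F) with hφ
  have hmemS : ∀ s : F, s ∈ S ↔ ∃ x : F, T x = s := by
    intro s; simp [hS, eq_comm]
  have hsubS : ∀ s t : F, s ∈ S → t ∈ S → s - t ∈ S := by
    intro s t hs ht
    obtain ⟨x, hx⟩ := (hmemS s).1 hs
    obtain ⟨y, hy⟩ := (hmemS t).1 ht
    refine (hmemS _).2 ⟨x - y, ?_⟩
    simp only [hT] at *
    rw [sub_pow_char]
    linear_combination hx - hy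
  have hβS : β ∉ S := by
    intro h
    obtain ⟨x, hx⟩ := (hmemS β).1 h
    exact hβ x hx
  have hβ'S : β' ∉ S := by
    intro h
    obtain ⟨x, hx⟩ := (hmemS β').1 h
    exact hβ' x hx
  have hφinj : Function.Injective φ := by
    rintro ⟨n₁, s₁, hs₁⟩ ⟨n₂, s₂, hs₂⟩ h
    simp only [hφ] at h
    have key : χ (n₁ - n₂) * β = s₂ - s₁ := by
      rw [map_sub]; linear_combination h
    have hn : n₁ = n₂ := by
      by_contra hne
      have hm : n₁ - n₂ ≠ 0 := sub_ne_zero.mpr hne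
      have hmem : χ (n₁ - n₂) * β ∈ S := key ▸ hsubS s₂ s₁ hs₂ hs₁
      obtain ⟨x, hx⟩ := (hmemS _).1 hmem
      apply hβS
      refine (hmemS β).2 ⟨χ (n₁ - n₂)⁻¹ * x, ?_⟩
      have := hscale (n₁ - n₂)⁻¹ x
      rw [← this, hT]
      have hx' : x - x ^ p = χ (n₁ - n₂) * β := hx
      rw [show (fun x => x - x ^ p) x = x - x ^ p from rfl, hx', ← mul_assoc, ← map_mul,
        inv_mul_cancel₀ hm, map_one, one_mul]
    subst hn
    have : s₁ = s₂ := by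
      have := key
      simp only [sub_self, map_zero, zero_mul] at this
      linear_combination this
    simp [Prod.ext_iff, Subtype.ext_iff, this]
  have hcard : Fintype.card (ZMod p × {s // s ∈ S}) = Fintype.card F := by
    have h1 : Fintype.card (ZMod p × {s // s ∈ S}) = p * S.card := by
      simp [ZMod.card, Fintype.card_coe]
    have h2 : Fintype.card (ZMod p × {s // s ∈ S}) ≤ Fintype.card F :=
      Fintype.card_le_of_injective φ hφinj
    omega
  have hφbij : Function.Bijective φ :=
    (Fintype.bijective_iff_injective_and_card φ).2 ⟨hφinj, hcard⟩
  obtain ⟨⟨n, s, hs⟩, hns⟩ := hφbij.2 β'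
  obtain ⟨x, hx⟩ := (hmemS s).1 hs
  have hn0 : n ≠ 0 := by
    rintro rfl
    apply hβ'S
    simp only [hφ, map_zero, zero_mul, zero_add] at hns
    exact hns ▸ hs
  refine ⟨χ n, x, fun h => hn0 (hχinj (by simpa using h)), hχp n, ?_⟩
  simp only [hφ] at hns
  have hx' : x - x ^ p = s := hx
  linear_combination -hns - hx'

end aux

theorem stmt11 {F : Type*} [Field F] [Fintype F] (p k : ℕ) [Fact p.Prime] (hk : 1 ≤ k)
    (hq : Fintype.card F = p ^ k) (a a' : Fˣ) (b b' : F)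
    (hfa : ¬∃ x : F, (a : F) * x ^ p + b = x) (hfa' : ¬∃ x : F, (a' : F) * x ^ p + b' = x) :
    DynEquiv (fun x : F => (a : F) * x ^ p + b) (fun x : F => (a' : F) * x ^ p + b') := by
  classical
  have hpp : p.Prime := Fact.out
  -- CharP F p
  haveI : CharP F (ringChar F) := ringChar.charP F
  obtain ⟨n, hrp, hcard⟩ := FiniteField.card F (ringChar F)
  have hrpeq : ringChar F = p := by
    have hdvd : ringChar F ∣ p ^ k := by
      rw [← hq, hcard]
      exact dvd_pow_self _ n.ne_zero
    exact (Nat.prime_dvd_prime_iff_eq hrp hpp).1 (hrp.dvd_of_dvd_pow hdvd)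
  haveI : CharP F p := hrpeq ▸ ringChar.charP F
  push_neg at hfa hfa'
  -- step A: find c with a * c^p = c, c ≠ 0
  have stepA : ∀ (α : Fˣ) (β : F), (∀ x : F, (α : F) * x ^ p + β ≠ x) →
      ∃ c : F, c ≠ 0 ∧ (α : F) * c ^ p = c := by
    intro α β hfree
    have hnsurj : ¬ Function.Surjective (fun x : F => (α : F) * x ^ p - x) := by
      intro hs
      obtain ⟨x, hx⟩ := hs (-β)
      exact hfree x (by linear_combination hx)
    have hninj : ¬ Function.Injective (fun x : F => (α : F) * x ^ p - x) := by
      intro hi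
      exact hnsurj (Finite.surjective_of_injective hi)
    simp only [Function.Injective, not_forall] at hninj
    obtain ⟨x, y, hxy, hne⟩ := hninj
    refine ⟨x - y, sub_ne_zero.mpr hne, ?_⟩
    rw [sub_pow_char]
    have hxy' : (α : F) * x ^ p - x = (α : F) * y ^ p - y := hxy
    linear_combination hxy'
  obtain ⟨c, hc0, hac⟩ := stepA a b hfa
  obtain ⟨c', hc'0, hac'⟩ := stepA a' b' hfa'
  -- step B: reduce to monic Artin-Schreier form
  have hfree : ∀ (α : Fˣ) (β : F) (c : F), c ≠ 0 → (α : F) * c ^ p = c →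
      (∀ x : F, (α : F) * x ^ p + β ≠ x) → ∀ z : F, z - z ^ p ≠ β * c⁻¹ := by
    intro α β c hcne hαc hnofix z hz
    apply hnofix (c * z)
    rw [mul_pow]
    have : β = c * (z - z ^ p) := by
      field_simp at hz
      linear_combination -hz
    rw [this]
    linear_combination z ^ p * hαc
  have h1 : DynEquiv (fun x : F => x ^ p + b * c⁻¹) (fun x : F => (a : F) * x ^ p + b) :=
    scale_conj _ _ _ hc0 hac
  have h2 : DynEquiv (fun x : F => x ^ p + b' * c'⁻¹) (fun x : F => (a' : F) * x ^ p + b') :=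
    scale_conj _ _ _ hc'0 hac'
  obtain ⟨u, v, hu0, hup, hv⟩ := exists_scale (b * c⁻¹) (b' * c'⁻¹)
    (hfree a b c hc0 hac hfa) (hfree a' b' c' hc'0 hac' hfa')
  have hmid : DynEquiv (fun x : F => x ^ p + b * c⁻¹) (fun x : F => x ^ p + b' * c'⁻¹) :=
    affine_conj u v hu0 hup _ _ hv
  exact (h1.symm'.trans' hmid).trans' h2
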